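/- Let $(\mathcal{A},[~,~],N)$ be a Nijenhuis mock-Lie algebra, $(V,\rho)$ a finite-dimensional representation of $(\mathcal{A},[~,~])$, $(V^*,\rho^*,\beta^*)$ a representation of $(\mathcal{A},[~,~],N)$, and $S:\mathcal{A}\to\mathcal{A}$, $\alpha:V\to V$, $T:V\to\mathcal{A}$ linear maps. View $T$ as an element of $(\mathcal{A}\ltimes_{\rho^*}V^*)^{\otimes 2}$ via $T=\sum_i T(e_i)\otimes e_i^*$. Then $r = T - \tau(T)$ is an antisymmetric solution of the $(S+\alpha^*)$-admissible mock-Lie Yang-Baxter equation in the Nijenhuis mock-Lie algebra $(\mathcal{A}\ltimes_{\rho^*}V^*, N+\beta^*)$ if and only if $T$ is a weak $\mathcal{O}$-operator associated to $(V,\rho)$ and $\alpha$ (i.e. $[T(u),T(v)]=T(\rho(T(u))v+\rho(T(v))u)$ and $N\circ T=T\circ\alpha$) and satisfies $T\circ\beta=S\circ T$. -/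
import Mathlib


open TensorProduct Module

section Helpers
variable {K V ι : Type*} [Field K] [AddCommGroup V] [Module K V]
  [Fintype ι] [DecidableEq ι] (e : Basis ι K V)

omit [DecidableEq ι] in
lemma sum_coord_smul' {M : Type*} [AddCommGroup M] [Module K M] (f : V →ₗ[K] M) (x : V) :
    ∑ i, e.coord i x • f (e i) = f x := by
  have h : f x = f (∑ i, e.repr x i • e i) := by rw [Basis.sum_repr]
  rw [h, map_sum]
  simp [Basis.coord_apply, map_smul]

omit [DecidableEq ι] in
lemma dualMap_coord' (γ : V →ₗ[K] V) (i : ι) :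
    γ.dualMap (e.coord i) = ∑ j, e.coord i (γ (e j)) • e.coord j := by
  ext x
  rw [LinearMap.dualMap_apply, ← sum_coord_smul' e γ x, map_sum]
  simp [mul_comm]

omit [DecidableEq ι] in
lemma master' {M P : Type*} [AddCommGroup M] [Module K M] [AddCommGroup P] [Module K P]
    (f : V →ₗ[K] M) (γ : V →ₗ[K] V) (Φ : Dual K V →ₗ[K] M →ₗ[K] P) :
    ∑ i, Φ (γ.dualMap (e.coord i)) (f (e i)) = ∑ i, Φ (e.coord i) (f (γ (e i))) := by
  simp only [dualMap_coord' e γ, map_sum, LinearMap.sum_apply, map_smul, LinearMap.smul_apply]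
  rw [Finset.sum_comm]
  refine Finset.sum_congr rfl fun j _ => ?_
  simpa using sum_coord_smul' e ((Φ (e.coord j)).comp f) (γ (e j))

end Helpers

section Phis
variable {K A V : Type*} [Field K] [AddCommGroup A] [Module K A]
    [AddCommGroup V] [Module K V]

local notation "W" => (A × Dual K V)
local notation "W3" => ((A × Dual K V) ⊗[K] ((A × Dual K V) ⊗[K] (A × Dual K V)))

/-- g m ↦ (m,0)⊗(0,g) -/
noncomputable def ΦAD : Dual K V →ₗ[K] A →ₗ[K]
    ((A × Dual K V) ⊗[K] (A × Dual K V)) :=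
  LinearMap.mk₂ K (fun g m => ((m, 0) : W) ⊗ₜ[K] (((0 : A), g) : W))
    (fun g g' m => by beta_reduce; rw [← tmul_add]; simp)
    (fun c g m => by beta_reduce; rw [← tmul_smul]; simp)
    (fun g m m' => by beta_reduce; rw [← add_tmul]; simp)
    (fun c g m => by beta_reduce; rw [smul_tmul']; simp)

/-- g m ↦ (0,-g) ⊗ (m,0) -/
noncomputable def ΦnDA : Dual K V →ₗ[K] A →ₗ[K]
    ((A × Dual K V) ⊗[K] (A × Dual K V)) :=
  LinearMap.mk₂ K (fun g m => (((0 : A), -g) : W) ⊗ₜ[K] ((m, 0) : W))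
    (fun g g' m => by beta_reduce; rw [← add_tmul]; simp [neg_add, add_comm])
    (fun c g m => by beta_reduce; rw [smul_tmul']; simp)
    (fun g m m' => by beta_reduce; rw [← tmul_add]; simp)
    (fun c g m => by beta_reduce; rw [← tmul_smul]; simp)

/-- g m ↦ (m,0)⊗(c⊗(0,g)) -/
noncomputable def ΦP1 (c : A × Dual K V) : Dual K V →ₗ[K] A →ₗ[K] W3 :=
  LinearMap.mk₂ K (fun g m => ((m, 0) : W) ⊗ₜ[K] (c ⊗ₜ[K] (((0 : A), g) : W)))
    (fun g g' m => by beta_reduce; rw [← tmul_add, ← tmul_add]; simp)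
    (fun c₀ g m => by beta_reduce; rw [← tmul_smul, ← tmul_smul]; simp)
    (fun g m m' => by beta_reduce; rw [← add_tmul]; simp)
    (fun c₀ g m => by beta_reduce; rw [smul_tmul']; simp)

/-- g m ↦ (m,0)⊗((0,g)⊗c) -/
noncomputable def ΦP2 (c : A × Dual K V) : Dual K V →ₗ[K] A →ₗ[K] W3 :=
  LinearMap.mk₂ K (fun g m => ((m, 0) : W) ⊗ₜ[K] ((((0 : A), g) : W) ⊗ₜ[K] c))
    (fun g g' m => by beta_reduce; rw [← tmul_add, ← add_tmul]; simp)
    (fun c₀ g m => by beta_reduce; rw [← tmul_smul, smul_tmul']; simp)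
    (fun g m m' => by beta_reduce; rw [← add_tmul]; simp)
    (fun c₀ g m => by beta_reduce; rw [smul_tmul']; simp)

/-- g m ↦ (0,-g)⊗((m,0)⊗c) -/
noncomputable def ΦP3n (c : A × Dual K V) : Dual K V →ₗ[K] A →ₗ[K] W3 :=
  LinearMap.mk₂ K (fun g m => (((0 : A), -g) : W) ⊗ₜ[K] (((m, 0) : W) ⊗ₜ[K] c))
    (fun g g' m => by beta_reduce; rw [← add_tmul]; simp [neg_add, add_comm])
    (fun c₀ g m => by beta_reduce; rw [smul_tmul']; simp)
    (fun g m m' => by beta_reduce; rw [← tmul_add, ← add_tmul]; simp)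
    (fun c₀ g m => by beta_reduce; rw [← tmul_smul, smul_tmul']; simp)

/-- g m ↦ (0,-g)⊗(c⊗(m,0)) -/
noncomputable def ΦP4n (c : A × Dual K V) : Dual K V →ₗ[K] A →ₗ[K] W3 :=
  LinearMap.mk₂ K (fun g m => (((0 : A), -g) : W) ⊗ₜ[K] (c ⊗ₜ[K] ((m, 0) : W)))
    (fun g g' m => by beta_reduce; rw [← add_tmul]; simp [neg_add, add_comm])
    (fun c₀ g m => by beta_reduce; rw [smul_tmul']; simp)
    (fun g m m' => by beta_reduce; rw [← tmul_add, ← tmul_add]; simp)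
    (fun c₀ g m => by beta_reduce; rw [← tmul_smul, ← tmul_smul]; simp)

/-- g m ↦ c⊗((m,0)⊗(0,g)) -/
noncomputable def ΦP5 (c : A × Dual K V) : Dual K V →ₗ[K] A →ₗ[K] W3 :=
  LinearMap.mk₂ K (fun g m => c ⊗ₜ[K] (((m, 0) : W) ⊗ₜ[K] (((0 : A), g) : W)))
    (fun g g' m => by beta_reduce; rw [← tmul_add, ← tmul_add]; simp)
    (fun c₀ g m => by beta_reduce; rw [← tmul_smul, ← tmul_smul]; simp)
    (fun g m m' => by beta_reduce; rw [← tmul_add, ← add_tmul]; simp)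
    (fun c₀ g m => by beta_reduce; rw [← tmul_smul, smul_tmul']; simp)

/-- g m ↦ c⊗((0,-g)⊗(m,0)) -/
noncomputable def ΦP6n (c : A × Dual K V) : Dual K V →ₗ[K] A →ₗ[K] W3 :=
  LinearMap.mk₂ K (fun g m => c ⊗ₜ[K] ((((0 : A), -g) : W) ⊗ₜ[K] ((m, 0) : W)))
    (fun g g' m => by beta_reduce; rw [← tmul_add, ← add_tmul]; simp [neg_add, add_comm])
    (fun c₀ g m => by beta_reduce; rw [← tmul_smul, smul_tmul']; simp)
    (fun g m m' => by beta_reduce; rw [← tmul_add, ← tmul_add]; simp)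
    (fun c₀ g m => by beta_reduce; rw [← tmul_smul, ← tmul_smul]; simp)

noncomputable def evD (v : V) : (A × Dual K V) →ₗ[K] K :=
  (LinearMap.applyₗ v).comp (LinearMap.snd K A (Dual K V))

noncomputable def L2a (v : V) : ((A × Dual K V) ⊗[K] (A × Dual K V)) →ₗ[K] A :=
  (TensorProduct.rid K A).toLinearMap.comp
    (TensorProduct.map (LinearMap.fst K A (Dual K V)) (evD v))

noncomputable def L2b (v : V) : ((A × Dual K V) ⊗[K] (A × Dual K V)) →ₗ[K] A :=
  (TensorProduct.lid K A).toLinearMap.comp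
    (TensorProduct.map (evD v) (LinearMap.fst K A (Dual K V)))

noncomputable def L3 (u v : V) :
    ((A × Dual K V) ⊗[K] ((A × Dual K V) ⊗[K] (A × Dual K V))) →ₗ[K] A :=
  (TensorProduct.rid K A).toLinearMap.comp
    (TensorProduct.map (LinearMap.fst K A (Dual K V))
      ((TensorProduct.lid K K).toLinearMap.comp (TensorProduct.map (evD u) (evD v))))

end Phis

/-- The semi-direct product bracket on `A ⊕ V^*` for the dual action `ρ^*`. -/
def sdBracket {K A V : Type*} [Field K] [AddCommGroup A] [Module K A]
    [AddCommGroup V] [Module K V] (b : A →ₗ[K] A →ₗ[K] A)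
    (ρ : A →ₗ[K] V →ₗ[K] V) (u v : A × Dual K V) : A × Dual K V :=
  (b u.1 v.1, (ρ u.1).dualMap v.2 + (ρ v.1).dualMap u.2)

/-- Componentwise map `(N + β^*)` on `A ⊕ V^*`. -/
def cwMap {K A V : Type*} [Field K] [AddCommGroup A] [Module K A]
    [AddCommGroup V] [Module K V] (N : A →ₗ[K] A) (β : V →ₗ[K] V)
    (u : A × Dual K V) : A × Dual K V :=
  (N u.1, β.dualMap u.2)

/-- Left components of `r = T - τ(T)` in `(A ⋉ V^*) ⊗ (A ⋉ V^*)`. -/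
noncomputable def rLeft {K A V ι : Type*} [Field K] [AddCommGroup A] [Module K A]
    [AddCommGroup V] [Module K V] [Fintype ι] [DecidableEq ι]
    (e : Basis ι K V) (T : V →ₗ[K] A) : ι ⊕ ι → A × Dual K V :=
  Sum.elim (fun i => (T (e i), 0)) (fun i => (0, - e.coord i))

/-- Right components of `r = T - τ(T)`. -/
noncomputable def rRight {K A V ι : Type*} [Field K] [AddCommGroup A] [Module K A]
    [AddCommGroup V] [Module K V] [Fintype ι] [DecidableEq ι]
    (e : Basis ι K V) (T : V →ₗ[K] A) : ι ⊕ ι → A × Dual K V :=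
  Sum.elim (fun i => ((0 : A), e.coord i)) (fun i => (T (e i), 0))

set_option maxHeartbeats 2000000 in
set_option maxSynthPendingDepth 3 in
/-- `r = T - τ(T)` is an antisymmetric solution of the `(S+α^*)`-admissible mock-Lie
Yang-Baxter equation in `(A ⋉_{ρ^*} V^*, N+β^*)` iff `T` is a weak `𝒪`-operator
associated to `(V, ρ)` and `α` satisfying `T ∘ β = S ∘ T`. -/
theorem stmt18 {K A V ι : Type*} [Field K] [CharZero K]
    [AddCommGroup A] [Module K A] [AddCommGroup V] [Module K V]
    [Fintype ι] [DecidableEq ι] (e : Basis ι K V)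
    (b : A →ₗ[K] A →ₗ[K] A) (N S : A →ₗ[K] A)
    (ρ : A →ₗ[K] V →ₗ[K] V) (α β : V →ₗ[K] V) (T : V →ₗ[K] A)
    (hcomm : ∀ x y : A, b x y = b y x)
    (hjac : ∀ x y z : A, b x (b y z) + b y (b z x) + b z (b x y) = 0)
    (hN : ∀ x y : A, b (N x) (N y) + N (N (b x y)) = N (b (N x) y) + N (b x (N y)))
    (hrep : ∀ (x y : A) (v : V), ρ (b x y) v = - ρ x (ρ y v) - ρ y (ρ x v))
    -- `(V^*, ρ^*, β^*)` is a representation of `(A,[,],N)`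
    (hdualrep : ∀ (x : A) (f : Dual K V),
      (ρ (N x)).dualMap (β.dualMap f) + β.dualMap (β.dualMap ((ρ x).dualMap f)) =
        β.dualMap ((ρ (N x)).dualMap f) + β.dualMap ((ρ x).dualMap (β.dualMap f))) :
    ((∑ k, ∑ l, (sdBracket b ρ (rLeft e T k) (rLeft e T l)) ⊗ₜ[K]
          ((rRight e T k) ⊗ₜ[K] (rRight e T l)) +
      ∑ k, ∑ l, (rLeft e T k) ⊗ₜ[K]
          ((rLeft e T l) ⊗ₜ[K] (sdBracket b ρ (rRight e T k) (rRight e T l))) -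
      ∑ k, ∑ l, (rLeft e T k) ⊗ₜ[K]
          ((sdBracket b ρ (rRight e T k) (rLeft e T l)) ⊗ₜ[K] (rRight e T l)) = 0) ∧
     (∑ k, (cwMap N β (rLeft e T k)) ⊗ₜ[K] (rRight e T k) -
      ∑ k, (rLeft e T k) ⊗ₜ[K] (cwMap S α (rRight e T k)) = 0) ∧
     (∑ k, (cwMap S α (rLeft e T k)) ⊗ₜ[K] (rRight e T k) -
      ∑ k, (rLeft e T k) ⊗ₜ[K] (cwMap N β (rRight e T k)) = 0)) ↔
    ((∀ u v : V, b (T u) (T v) = T (ρ (T u) v + ρ (T v) u)) ∧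
     (∀ v : V, N (T v) = T (α v)) ∧
     (∀ v : V, T (β v) = S (T v))) := by
  constructor
  · rintro ⟨h1, h2, -⟩
    -- extract the weak 𝒪-operator identity from the first equation
    simp only [Fintype.sum_sum_type, rLeft, rRight, Sum.elim_inl, Sum.elim_inr, sdBracket,
      map_zero, map_neg, LinearMap.zero_apply, zero_add, add_zero, neg_zero,
      show (LinearMap.dualMap (0 : V →ₗ[K] V)) = 0 from by ext f x; simp,
      show ((0:A), (0:Dual K V)) = (0 : A × Dual K V) from rfl,
      zero_tmul, tmul_zero, Finset.sum_const_zero, Finset.sum_add_distrib] at h1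
    simp only [Fintype.sum_sum_type, rLeft, rRight, Sum.elim_inl, Sum.elim_inr, cwMap,
      map_zero, map_neg] at h2
    have keyO : ∀ p q : ι,
        b (T (e p)) (T (e q)) = T (ρ (T (e p)) (e q)) + T (ρ (T (e q)) (e p)) := by
      intro p q
      have h' := congrArg (L3 (K := K) (A := A) (V := V) (e p) (e q)) h1
      simp only [map_sub, map_add, map_sum, map_zero, L3, evD, LinearMap.coe_comp,
        Function.comp_apply, TensorProduct.map_tmul, TensorProduct.rid_tmul,
        TensorProduct.lid_tmul, LinearMap.fst_apply, LinearMap.snd_apply, LinearEquiv.coe_coe,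
        LinearMap.applyₗ_apply_apply, smul_zero, zero_smul, Finset.sum_const_zero, add_zero,
        zero_add, sub_zero, LinearMap.neg_apply, neg_smul, smul_smul,
        Basis.coord_apply, Basis.repr_self, Finsupp.single_apply] at h'
      simp only [ite_smul, one_smul, zero_smul, smul_ite, smul_zero, Finset.sum_ite_eq,
        Finset.mem_univ, if_true, LinearMap.dualMap_apply, Finset.sum_neg_distrib] at h'
      simp only [smul_eq_mul, mul_one] at h'
      rw [sum_coord_smul' e T ((ρ (T (e p))) (e q)),
        sum_coord_smul' e T ((ρ (T (e q))) (e p))] at h'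
      rw [← sub_eq_zero]
      abel_nf at h' ⊢
      exact h'
    have keyN : ∀ q, N (T (e q)) = T (α (e q)) := by
      intro q
      have h' := congrArg (L2a (K := K) (A := A) (V := V) (e q)) h2
      simp only [map_sub, map_add, map_sum, map_zero, L2a, evD, LinearMap.coe_comp,
        Function.comp_apply, TensorProduct.map_tmul, TensorProduct.rid_tmul,
        LinearMap.fst_apply, LinearMap.snd_apply, LinearEquiv.coe_coe,
        LinearMap.applyₗ_apply_apply, smul_zero, zero_smul, Finset.sum_const_zero, add_zero,
        LinearMap.dualMap_apply, sub_zero] at h'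
      have hh := sum_coord_smul' e (N ∘ₗ T) (e q)
      simp only [LinearMap.coe_comp, Function.comp_apply] at hh
      rw [hh, sum_coord_smul' e T (α (e q))] at h'
      exact sub_eq_zero.mp h'
    have keyβ : ∀ q, T (β (e q)) = S (T (e q)) := by
      intro q
      have h' := congrArg (L2b (K := K) (A := A) (V := V) (e q)) h2
      simp only [map_sub, map_add, map_sum, map_zero, L2b, evD, LinearMap.coe_comp,
        Function.comp_apply, TensorProduct.map_tmul, TensorProduct.lid_tmul,
        LinearMap.fst_apply, LinearMap.snd_apply, LinearEquiv.coe_coe,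
        LinearMap.applyₗ_apply_apply, smul_zero, zero_smul, Finset.sum_const_zero, add_zero,
        zero_add, LinearMap.dualMap_apply, sub_zero, LinearMap.neg_apply, neg_smul,
        Finset.sum_neg_distrib] at h'
      have hh := sum_coord_smul' e (S ∘ₗ T) (e q)
      simp only [LinearMap.coe_comp, Function.comp_apply] at hh
      rw [hh, sum_coord_smul' e T (β (e q))] at h'
      have := sub_eq_zero.mp h'
      simpa using this
    refine ⟨?_, ?_, ?_⟩
    · intro u v
      have hBL : b.compl₁₂ T T = (ρ.comp T).compr₂ T + ((ρ.comp T).compr₂ T).flip := by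
        refine Basis.ext e fun p => Basis.ext e fun q => ?_
        simpa using keyO p q
      have := DFunLike.congr_fun (DFunLike.congr_fun hBL u) v
      simpa [map_add] using this
    · intro v
      have hENT : N ∘ₗ T = T ∘ₗ α := Basis.ext e fun q => by simpa using keyN q
      simpa using DFunLike.congr_fun hENT v
    · intro v
      have hE : T ∘ₗ β = S ∘ₗ T := Basis.ext e fun q => by simpa using keyβ q
      simpa using DFunLike.congr_fun hE v
  · rintro ⟨hO, hNT, hβ⟩
    refine ⟨?_, ?_, ?_⟩
    · -- the Yang–Baxter equation
      simp only [Fintype.sum_sum_type, rLeft, rRight, Sum.elim_inl, Sum.elim_inr, sdBracket,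
        map_zero, map_neg, LinearMap.zero_apply, zero_add, add_zero, neg_zero,
        show (LinearMap.dualMap (0 : V →ₗ[K] V)) = 0 from by ext f x; simp,
        show ((0:A), (0:Dual K V)) = (0 : A × Dual K V) from rfl,
        zero_tmul, tmul_zero, Finset.sum_const_zero, Finset.sum_add_distrib]
      have hsplit : ∀ x y : V, ((b (T x)) (T y), (0 : Dual K V)) =
          ((T ((ρ (T x)) y), (0 : Dual K V)) : A × Dual K V) +
            (T ((ρ (T y)) x), (0 : Dual K V)) := by
        intro x y
        rw [hO, map_add]
        simp
      have negMid : ∀ (w w' : A × Dual K V) (f : Dual K V),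
          w ⊗ₜ[K] ((((0:A), -f) : A × Dual K V) ⊗ₜ[K] w') =
            -(w ⊗ₜ[K] ((((0:A), f) : A × Dual K V) ⊗ₜ[K] w')) := by
        intro w w' f
        rw [show (((0:A), -f) : A × Dual K V) = -((0:A), f) from by simp, neg_tmul, tmul_neg]
      have e1 : ∑ x : ι, ∑ x_1 : ι, (((b (T (e x))) (T (e x_1)), (0 : Dual K V)) : A × Dual K V) ⊗ₜ[K]
            ((((0:A), e.coord x) : A × Dual K V) ⊗ₜ[K] (((0:A), e.coord x_1) : A × Dual K V)) =
          (∑ x : ι, ∑ x_1 : ι, ((T ((ρ (T (e x))) (e x_1)), (0 : Dual K V)) : A × Dual K V) ⊗ₜ[K]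
            ((((0:A), e.coord x) : A × Dual K V) ⊗ₜ[K] (((0:A), e.coord x_1) : A × Dual K V))) +
          ∑ x : ι, ∑ x_1 : ι, ((T ((ρ (T (e x_1))) (e x)), (0 : Dual K V)) : A × Dual K V) ⊗ₜ[K]
            ((((0:A), e.coord x) : A × Dual K V) ⊗ₜ[K] (((0:A), e.coord x_1) : A × Dual K V)) := by
        rw [← Finset.sum_add_distrib]
        refine Finset.sum_congr rfl fun x _ => ?_
        rw [← Finset.sum_add_distrib]
        refine Finset.sum_congr rfl fun y _ => ?_
        rw [hsplit, add_tmul]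
      have h2 := fun j : ι => master' (M := A) e T (ρ (T (e j)))
        (ΦP3n (K := K) (A := A) (V := V) ((0 : A), e.coord j))
      simp only [ΦP3n, LinearMap.mk₂_apply] at h2
      have e2 : ∑ x : ι, ∑ x_1 : ι, (((0:A), -(ρ (T (e x_1))).dualMap (e.coord x)) : A × Dual K V) ⊗ₜ[K]
            (((T (e x), (0 : Dual K V)) : A × Dual K V) ⊗ₜ[K] (((0:A), e.coord x_1) : A × Dual K V)) =
          ∑ x : ι, ∑ x_1 : ι, (((0:A), -e.coord x) : A × Dual K V) ⊗ₜ[K]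
            (((T ((ρ (T (e x_1))) (e x)), (0 : Dual K V)) : A × Dual K V) ⊗ₜ[K]
              (((0:A), e.coord x_1) : A × Dual K V)) := by
        rw [Finset.sum_comm]
        simp only [h2]
        rw [Finset.sum_comm]
      have h3 := fun j : ι => master' (M := A) e T (ρ (T (e j)))
        (ΦP4n (K := K) (A := A) (V := V) ((0 : A), e.coord j))
      simp only [ΦP4n, LinearMap.mk₂_apply] at h3
      have e3 : ∑ x : ι, ∑ x_1 : ι, (((0:A), -(ρ (T (e x))).dualMap (e.coord x_1)) : A × Dual K V) ⊗ₜ[K]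
            ((((0:A), e.coord x) : A × Dual K V) ⊗ₜ[K] ((T (e x_1), (0 : Dual K V)) : A × Dual K V)) =
          ∑ x : ι, ∑ x_1 : ι, (((0:A), -e.coord x) : A × Dual K V) ⊗ₜ[K]
            ((((0:A), e.coord x_1) : A × Dual K V) ⊗ₜ[K]
              ((T ((ρ (T (e x_1))) (e x)), (0 : Dual K V)) : A × Dual K V)) := by
        simp only [h3]
        rw [Finset.sum_comm]
      have h4 := fun j : ι => master' (M := A) e T (ρ (T (e j)))
        (ΦP5 (K := K) (A := A) (V := V) ((0 : A), -e.coord j))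
      simp only [ΦP5, LinearMap.mk₂_apply] at h4
      have e4 : ∑ x : ι, ∑ x_1 : ι, (((0:A), -e.coord x) : A × Dual K V) ⊗ₜ[K]
            (((T (e x_1), (0 : Dual K V)) : A × Dual K V) ⊗ₜ[K]
              (((0:A), (ρ (T (e x))).dualMap (e.coord x_1)) : A × Dual K V)) =
          ∑ x : ι, ∑ x_1 : ι, (((0:A), -e.coord x) : A × Dual K V) ⊗ₜ[K]
            (((T ((ρ (T (e x))) (e x_1)), (0 : Dual K V)) : A × Dual K V) ⊗ₜ[K]
              (((0:A), e.coord x_1) : A × Dual K V)) := by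
        simp only [h4]
      have h5 := fun j : ι => master' (M := A) e T (ρ (T (e j)))
        (ΦP1 (K := K) (A := A) (V := V) ((0 : A), -e.coord j))
      simp only [ΦP1, LinearMap.mk₂_apply] at h5
      have e5 : ∑ x : ι, ∑ x_1 : ι, ((T (e x), (0 : Dual K V)) : A × Dual K V) ⊗ₜ[K]
            ((((0:A), -e.coord x_1) : A × Dual K V) ⊗ₜ[K]
              (((0:A), (ρ (T (e x_1))).dualMap (e.coord x)) : A × Dual K V)) =
          -∑ x : ι, ∑ x_1 : ι, ((T ((ρ (T (e x))) (e x_1)), (0 : Dual K V)) : A × Dual K V) ⊗ₜ[K]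
            ((((0:A), e.coord x) : A × Dual K V) ⊗ₜ[K] (((0:A), e.coord x_1) : A × Dual K V)) := by
        rw [Finset.sum_comm]
        simp only [h5]
        simp only [negMid, Finset.sum_neg_distrib]
      have e6 : ∑ x : ι, ∑ x_1 : ι, (((0:A), -e.coord x) : A × Dual K V) ⊗ₜ[K]
            ((((0:A), -e.coord x_1) : A × Dual K V) ⊗ₜ[K]
              (((b (T (e x))) (T (e x_1)), (0 : Dual K V)) : A × Dual K V)) =
          (∑ x : ι, ∑ x_1 : ι, (((0:A), -e.coord x) : A × Dual K V) ⊗ₜ[K]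
            ((((0:A), -e.coord x_1) : A × Dual K V) ⊗ₜ[K]
              ((T ((ρ (T (e x))) (e x_1)), (0 : Dual K V)) : A × Dual K V))) -
          ∑ x : ι, ∑ x_1 : ι, (((0:A), -e.coord x) : A × Dual K V) ⊗ₜ[K]
            ((((0:A), e.coord x_1) : A × Dual K V) ⊗ₜ[K]
              ((T ((ρ (T (e x_1))) (e x)), (0 : Dual K V)) : A × Dual K V)) := by
        rw [← Finset.sum_sub_distrib]
        refine Finset.sum_congr rfl fun x _ => ?_
        rw [← Finset.sum_sub_distrib]
        refine Finset.sum_congr rfl fun y _ => ?_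
        rw [hsplit, tmul_add, tmul_add,
          negMid _ ((T ((ρ (T (e y))) (e x)), (0 : Dual K V)) : A × Dual K V)]
        abel
      have h7 := fun j : ι => master' (M := A) e T (ρ (T (e j)))
        (ΦP2 (K := K) (A := A) (V := V) ((0 : A), e.coord j))
      simp only [ΦP2, LinearMap.mk₂_apply] at h7
      have e7 : ∑ x : ι, ∑ x_1 : ι, ((T (e x), (0 : Dual K V)) : A × Dual K V) ⊗ₜ[K]
            ((((0:A), (ρ (T (e x_1))).dualMap (e.coord x)) : A × Dual K V) ⊗ₜ[K]
              (((0:A), e.coord x_1) : A × Dual K V)) =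
          ∑ x : ι, ∑ x_1 : ι, ((T ((ρ (T (e x_1))) (e x)), (0 : Dual K V)) : A × Dual K V) ⊗ₜ[K]
            ((((0:A), e.coord x) : A × Dual K V) ⊗ₜ[K] (((0:A), e.coord x_1) : A × Dual K V)) := by
        rw [Finset.sum_comm]
        simp only [h7]
        rw [Finset.sum_comm]
      have e8 : ∑ x : ι, ∑ x_1 : ι, (((0:A), -e.coord x) : A × Dual K V) ⊗ₜ[K]
            ((((b (T (e x))) (T (e x_1)), (0 : Dual K V)) : A × Dual K V) ⊗ₜ[K]
              (((0:A), e.coord x_1) : A × Dual K V)) =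
          (∑ x : ι, ∑ x_1 : ι, (((0:A), -e.coord x) : A × Dual K V) ⊗ₜ[K]
            (((T ((ρ (T (e x))) (e x_1)), (0 : Dual K V)) : A × Dual K V) ⊗ₜ[K]
              (((0:A), e.coord x_1) : A × Dual K V))) +
          ∑ x : ι, ∑ x_1 : ι, (((0:A), -e.coord x) : A × Dual K V) ⊗ₜ[K]
            (((T ((ρ (T (e x_1))) (e x)), (0 : Dual K V)) : A × Dual K V) ⊗ₜ[K]
              (((0:A), e.coord x_1) : A × Dual K V)) := by
        rw [← Finset.sum_add_distrib]
        refine Finset.sum_congr rfl fun x _ => ?_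
        rw [← Finset.sum_add_distrib]
        refine Finset.sum_congr rfl fun y _ => ?_
        rw [hsplit, add_tmul, tmul_add]
      have h9 := fun j : ι => master' (M := A) e T (ρ (T (e j)))
        (ΦP6n (K := K) (A := A) (V := V) ((0 : A), -e.coord j))
      simp only [ΦP6n, LinearMap.mk₂_apply] at h9
      have e9 : ∑ x : ι, ∑ x_1 : ι, (((0:A), -e.coord x) : A × Dual K V) ⊗ₜ[K]
            ((((0:A), -(ρ (T (e x))).dualMap (e.coord x_1)) : A × Dual K V) ⊗ₜ[K]
              ((T (e x_1), (0 : Dual K V)) : A × Dual K V)) =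
          ∑ x : ι, ∑ x_1 : ι, (((0:A), -e.coord x) : A × Dual K V) ⊗ₜ[K]
            ((((0:A), -e.coord x_1) : A × Dual K V) ⊗ₜ[K]
              ((T ((ρ (T (e x))) (e x_1)), (0 : Dual K V)) : A × Dual K V)) := by
        simp only [h9]
      rw [e1, e2, e3, e4, e5, e6, e7, e8, e9]
      abel
    · -- the first admissibility equation
      have key1 := master' (M := A) (P := (A × Dual K V) ⊗[K] (A × Dual K V)) e T α
        (ΦAD (K := K) (A := A) (V := V))
      have key2 := master' (M := A) (P := (A × Dual K V) ⊗[K] (A × Dual K V)) e T β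
        (ΦnDA (K := K) (A := A) (V := V))
      simp only [ΦAD, ΦnDA, LinearMap.mk₂_apply] at key1 key2
      simp only [Fintype.sum_sum_type, rLeft, rRight, Sum.elim_inl, Sum.elim_inr, cwMap,
        map_zero, map_neg]
      rw [key1, key2]
      simp only [hNT, hβ]
      abel
    · -- the second admissibility equation
      have key1 := master' (M := A) (P := (A × Dual K V) ⊗[K] (A × Dual K V)) e T β
        (ΦAD (K := K) (A := A) (V := V))
      have key2 := master' (M := A) (P := (A × Dual K V) ⊗[K] (A × Dual K V)) e T α
        (ΦnDA (K := K) (A := A) (V := V))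
      simp only [ΦAD, ΦnDA, LinearMap.mk₂_apply] at key1 key2
      simp only [Fintype.sum_sum_type, rLeft, rRight, Sum.elim_inl, Sum.elim_inr, cwMap,
        map_zero, map_neg]
      rw [key1, key2]
      simp only [hNT, hβ]
      abel
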